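/- Let C be an abelian category and 𝒲 a class of objects of C. Let 0→A→x B→y C→0 be a Hom(−,𝒲)-exact short exact sequence, and let 0→A→W⁰ᴬ→Kᴬ→0 and 0→C→W⁰ᶜ→Kᶜ→0 be short exact sequences with W⁰ᴬ ∈ 𝒲. Then there exist an object Kᴮ and morphisms forming a commutative 3×3 diagram in which: the three columns are short exact sequences 0→A→W⁰ᴬ→Kᴬ→0 (the given one), 0→B→W⁰ᴬ⊕W⁰ᶜ→Kᴮ→0, and 0→C→W⁰ᶜ→Kᶜ→0 (the given one); the top row is the given sequence 0→A→B→C→0; the middle row is the split short exact sequence 0→W⁰ᴬ→W⁰ᴬ⊕W⁰ᶜ→W⁰ᶜ→0 given by the canonical injection and projection; and the bottom row 0→Kᴬ→Kᴮ→Kᶜ→0 is a short exact sequence. Moreover: (1) if the first and third columns are Hom(−,𝒲)-exact, then all rows and columns of this diagram are Hom(−,𝒲)-exact; (2) if the top row and the first and third columns are Hom(𝒲,−)-exact, then all rows and columns of this diagram are Hom(𝒲,−)-exact. -/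
import Mathlib


open CategoryTheory Category Limits

universe v u

variable {C : Type u} [Category.{v} C] [Abelian C]

def SES {A B X : C} (f : A ⟶ B) (g : B ⟶ X) : Prop :=
  ∃ w : f ≫ g = 0, (CategoryTheory.ShortComplex.mk f g w).ShortExact

def CovExact (𝒲 : Set C) {A B X : C} (f : A ⟶ B) (g : B ⟶ X) : Prop :=
  ∀ W ∈ 𝒲,
    (Function.Injective fun u : W ⟶ A => u ≫ f) ∧
    (∀ v : W ⟶ B, v ≫ g = 0 → ∃ u : W ⟶ A, u ≫ f = v) ∧
    (Function.Surjective fun v : W ⟶ B => v ≫ g)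

def ContraExact (𝒲 : Set C) {A B X : C} (f : A ⟶ B) (g : B ⟶ X) : Prop :=
  ∀ W ∈ 𝒲,
    (Function.Injective fun u : X ⟶ W => g ≫ u) ∧
    (∀ v : B ⟶ W, f ≫ v = 0 → ∃ u : X ⟶ W, g ≫ u = v) ∧
    (Function.Surjective fun v : B ⟶ W => f ≫ v)

open ZeroObject in
lemma contra_of_ses {𝒲 : Set C} {A B X : C} {f : A ⟶ B} {g : B ⟶ X} (h : SES f g)
    (surj : ∀ W ∈ 𝒲, Function.Surjective fun v : B ⟶ W => f ≫ v) :
    ContraExact 𝒲 f g := by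
  obtain ⟨w, hse⟩ := h
  have : Epi g := hse.epi_g
  intro W hW
  refine ⟨fun u v huv => ?_, fun v hv => ?_, surj W hW⟩
  · exact (cancel_epi g).mp huv
  · obtain ⟨d, hd⟩ := CokernelCofork.IsColimit.desc' hse.gIsCokernel v hv
    exact ⟨d, hd⟩

lemma cov_of_ses {𝒲 : Set C} {A B X : C} {f : A ⟶ B} {g : B ⟶ X} (h : SES f g)
    (surj : ∀ W ∈ 𝒲, Function.Surjective fun v : W ⟶ B => v ≫ g) :
    CovExact 𝒲 f g := by
  obtain ⟨w, hse⟩ := h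
  have : Mono f := hse.mono_f
  intro W hW
  refine ⟨fun u v huv => ?_, fun v hv => ?_, surj W hW⟩
  · exact (cancel_mono f).mp huv
  · obtain ⟨d, hd⟩ := KernelFork.IsLimit.lift' hse.fIsKernel v hv
    exact ⟨d, hd⟩

/-- Dual horseshoe-type 3×3 diagram built from a `Hom(-,𝒲)`-exact sequence
`0→A→B→C→0` and short exact sequences `0→A→W⁰ᴬ→Kᴬ→0`, `0→C→W⁰ᶜ→Kᶜ→0` with
`W⁰ᴬ ∈ 𝒲`, together with the two "moreover" exactness transfers. -/
theorem stmt_7 (𝒲 : Set C) {A B X KA W0A KC W0C : C}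
    (x : A ⟶ B) (y : B ⟶ X)
    (gA : A ⟶ W0A) (fA : W0A ⟶ KA)
    (gC : X ⟶ W0C) (fC : W0C ⟶ KC)
    (hrow : SES x y) (hcon : ContraExact 𝒲 x y)
    (hA : SES gA fA) (hC : SES gC fC)
    (hWA : W0A ∈ 𝒲) :
    ∃ (KB : C) (gB : B ⟶ W0A ⊞ W0C) (fB : W0A ⊞ W0C ⟶ KB)
      (x1 : KA ⟶ KB) (y1 : KB ⟶ KC),
      -- commutativity of the four squares
      x ≫ gB = gA ≫ biprod.inl ∧
      gB ≫ biprod.snd = y ≫ gC ∧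
      biprod.inl ≫ fB = fA ≫ x1 ∧
      fB ≫ y1 = biprod.snd ≫ fC ∧
      -- the middle (split) row, the bottom row and the middle column are short exact
      SES (biprod.inl : W0A ⟶ W0A ⊞ W0C) (biprod.snd : W0A ⊞ W0C ⟶ W0C) ∧
      SES x1 y1 ∧
      SES gB fB ∧
      -- (1) if the first and third columns are Hom(-,𝒲)-exact, then so are all rows and columns
      (ContraExact 𝒲 gA fA → ContraExact 𝒲 gC fC →
        (ContraExact 𝒲 x y ∧
         ContraExact 𝒲 (biprod.inl : W0A ⟶ W0A ⊞ W0C) (biprod.snd : W0A ⊞ W0C ⟶ W0C) ∧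
         ContraExact 𝒲 x1 y1 ∧
         ContraExact 𝒲 gA fA ∧ ContraExact 𝒲 gB fB ∧ ContraExact 𝒲 gC fC)) ∧
      -- (2) if the top row and the first and third columns are Hom(𝒲,-)-exact,
      -- then so are all rows and columns
      (CovExact 𝒲 x y → CovExact 𝒲 gA fA → CovExact 𝒲 gC fC →
        (CovExact 𝒲 x y ∧
         CovExact 𝒲 (biprod.inl : W0A ⟶ W0A ⊞ W0C) (biprod.snd : W0A ⊞ W0C ⟶ W0C) ∧
         CovExact 𝒲 x1 y1 ∧
         CovExact 𝒲 gA fA ∧ CovExact 𝒲 gB fB ∧ CovExact 𝒲 gC fC)) := by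
  
  obtain ⟨wrow, hrowSE⟩ := hrow
  obtain ⟨wA, hASE⟩ := hA
  obtain ⟨wC, hCSE⟩ := hC
  have hmono_x : Mono x := hrowSE.mono_f
  have hepi_y : Epi y := hrowSE.epi_g
  have hmono_gA : Mono gA := hASE.mono_f
  have hepi_fA : Epi fA := hASE.epi_g
  have hmono_gC : Mono gC := hCSE.mono_f
  have hepi_fC : Epi fC := hCSE.epi_g
  -- lift gA along x using Hom(-,W0A)-exactness
  obtain ⟨tB, htB⟩ := (hcon W0A hWA).2.2 gA
  simp only at htB
  -- the middle column monomorphism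
  let gB : B ⟶ W0A ⊞ W0C := biprod.lift tB (y ≫ gC)
  have gB_fst : gB ≫ biprod.fst = tB := biprod.lift_fst _ _
  have sq2 : gB ≫ biprod.snd = y ≫ gC := biprod.lift_snd _ _
  have sq1 : x ≫ gB = gA ≫ biprod.inl := by
    apply biprod.hom_ext
    · simp [gB, htB]
    · rw [Category.assoc, sq2, ← Category.assoc, wrow, zero_comp, Category.assoc,
        biprod.inl_snd, comp_zero]
  have hmono_gB : Mono gB := by
    apply Preadditive.mono_of_cancel_zero
    intro P b hb
    have h1 : b ≫ tB = 0 := by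
      rw [← gB_fst, ← Category.assoc, hb, zero_comp]
    have h2 : b ≫ y = 0 := by
      have : b ≫ y ≫ gC = 0 := by
        rw [← sq2, ← Category.assoc, hb, zero_comp]
      rw [← cancel_mono gC, Category.assoc, this, zero_comp]
    obtain ⟨a, ha⟩ := KernelFork.IsLimit.lift' hrowSE.fIsKernel b h2
    have ha0 : a = 0 := by
      rw [← cancel_mono gA, zero_comp, ← htB, ← Category.assoc]
      erw [ha]
      exact h1
    rw [← ha, ha0, zero_comp]
  -- middle column
  let KB : C := cokernel gB
  let fB : W0A ⊞ W0C ⟶ KB := cokernel.π gB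
  have wB : gB ≫ fB = 0 := cokernel.condition gB
  have sesB : SES gB fB :=
    ⟨wB, { exact := ShortComplex.exact_of_g_is_cokernel _ (cokernelIsCokernel gB),
           mono_f := hmono_gB, epi_g := coequalizer.π_epi }⟩
  -- bottom row maps
  have hgAfB : gA ≫ biprod.inl ≫ fB = 0 := by
    rw [← Category.assoc, ← sq1, Category.assoc, wB, comp_zero]
  obtain ⟨x1, hx1⟩ := CokernelCofork.IsColimit.desc' hASE.gIsCokernel (biprod.inl ≫ fB) hgAfB
  have hx1 : fA ≫ x1 = biprod.inl ≫ fB := hx1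
  have hgBsnd : gB ≫ biprod.snd ≫ fC = 0 := by
    rw [← Category.assoc, sq2, Category.assoc, wC, comp_zero]
  let y1 : KB ⟶ KC := cokernel.desc gB (biprod.snd ≫ fC) hgBsnd
  have hy1 : fB ≫ y1 = biprod.snd ≫ fC := cokernel.π_desc _ _ _
  have w31 : x1 ≫ y1 = 0 := by
    rw [← cancel_epi fA, comp_zero, ← Category.assoc, hx1, Category.assoc, hy1,
      biprod.inl_snd_assoc, zero_comp]
  -- the snake input
  obtain ⟨Z, hZ⟩ := HasZeroObject.zero (C := C)
  let D : ShortComplex.SnakeInput C :=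
    { L₀ := ShortComplex.mk (0 : Z ⟶ Z) (0 : Z ⟶ Z) (by simp)
      L₁ := ShortComplex.mk x y wrow
      L₂ := ShortComplex.mk (biprod.inl : W0A ⟶ W0A ⊞ W0C) (biprod.snd) (by simp)
      L₃ := ShortComplex.mk x1 y1 w31
      v₀₁ := 0
      v₁₂ := { τ₁ := gA, τ₂ := gB, τ₃ := gC, comm₁₂ := sq1.symm, comm₂₃ := sq2 }
      v₂₃ := { τ₁ := fA, τ₂ := fB, τ₃ := fC, comm₁₂ := hx1, comm₂₃ := hy1 }
      w₀₂ := zero_comp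
      w₁₃ := by
        ext
        · exact wA
        · exact wB
        · exact wC
      h₀ := by
        apply ShortComplex.isLimitOfIsLimitπ
        · exact (KernelFork.isLimitMapConeEquiv _ _).symm
            (KernelFork.IsLimit.ofMonoOfIsZero
              (KernelFork.ofι (0 : Z ⟶ A) zero_comp) hmono_gA hZ)
        · exact (KernelFork.isLimitMapConeEquiv _ _).symm
            (KernelFork.IsLimit.ofMonoOfIsZero
              (KernelFork.ofι (0 : Z ⟶ B) zero_comp) hmono_gB hZ)
        · exact (KernelFork.isLimitMapConeEquiv _ _).symm
            (KernelFork.IsLimit.ofMonoOfIsZero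
              (KernelFork.ofι (0 : Z ⟶ X) zero_comp) hmono_gC hZ)
      h₃ := by
        apply ShortComplex.isColimitOfIsColimitπ
        · exact (CokernelCofork.isColimitMapCoconeEquiv _ _).symm hASE.gIsCokernel
        · exact (CokernelCofork.isColimitMapCoconeEquiv _ _).symm (cokernelIsCokernel gB)
        · exact (CokernelCofork.isColimitMapCoconeEquiv _ _).symm hCSE.gIsCokernel
      L₁_exact := hrowSE.exact
      epi_L₁_g := hepi_y
      L₂_exact := (ShortComplex.Splitting.ofHasBinaryBiproduct W0A W0C).exact
      mono_L₂_f := by dsimp; infer_instance }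
  have hmono_x1 : Mono x1 := by
    have h2' := D.L₂'_exact
    have hδ : D.L₂'.f = 0 := hZ.eq_of_src _ _
    exact h2'.mono_g hδ
  have hepi_y1 : Epi y1 := by
    have : Epi (fB ≫ y1) := by
      rw [hy1]
      exact epi_comp _ _
    exact epi_of_epi fB y1
  have sesBot : SES x1 y1 :=
    ⟨w31, { exact := D.L₃_exact, mono_f := hmono_x1, epi_g := hepi_y1 }⟩
  have sesSplit : SES (biprod.inl : W0A ⟶ W0A ⊞ W0C) (biprod.snd : W0A ⊞ W0C ⟶ W0C) :=
    ⟨by simp, (ShortComplex.Splitting.ofHasBinaryBiproduct W0A W0C).shortExact⟩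
  refine ⟨KB, gB, fB, x1, y1, sq1, sq2, hx1.symm, hy1, sesSplit, sesBot, sesB, ?_, ?_⟩
  · -- part (1): contravariant exactness transfers
    intro h1 h3
    refine ⟨hcon, ?_, ?_, h1, ?_, h3⟩
    · -- split row
      refine contra_of_ses sesSplit (fun W hW u => ⟨biprod.fst ≫ u, by simp⟩)
    · -- bottom row
      refine contra_of_ses sesBot (fun W hW u => ?_)
      have h0 : x ≫ (tB ≫ fA ≫ u) = 0 := by
        rw [← Category.assoc, htB, ← Category.assoc, wA, zero_comp]
      obtain ⟨u', hu'⟩ := (hcon W hW).2.1 (tB ≫ fA ≫ u) h0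
      obtain ⟨r, hr⟩ := (h3 W hW).2.2 u'
      simp only at hr
      have hgBt : gB ≫ (biprod.fst ≫ fA ≫ u - biprod.snd ≫ r) = 0 := by
        simp only [Preadditive.comp_sub, reassoc_of% gB_fst, reassoc_of% sq2, Category.assoc,
          hr, hu', sub_self]
      refine ⟨cokernel.desc gB _ hgBt, ?_⟩
      rw [← cancel_epi fA, ← Category.assoc, hx1, Category.assoc]
      show biprod.inl ≫ cokernel.π gB ≫ _ = fA ≫ u
      rw [cokernel.π_desc]
      simp
    · -- middle column
      refine contra_of_ses sesB (fun W hW u => ?_)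
      obtain ⟨p, hp⟩ := (h1 W hW).2.2 (x ≫ u)
      simp only at hp
      have h0 : x ≫ (u - tB ≫ p) = 0 := by
        rw [Preadditive.comp_sub, ← Category.assoc, htB, hp, sub_self]
      obtain ⟨q, hq⟩ := (hcon W hW).2.1 (u - tB ≫ p) h0
      obtain ⟨r, hr⟩ := (h3 W hW).2.2 q
      simp only at hr
      refine ⟨biprod.fst ≫ p + biprod.snd ≫ r, ?_⟩
      show gB ≫ (biprod.fst ≫ p + biprod.snd ≫ r) = u
      simp only [Preadditive.comp_add, reassoc_of% gB_fst, reassoc_of% sq2, Category.assoc,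
        hr, hq]
      abel
  · -- part (2): covariant exactness transfers
    intro hr0 h1 h3
    refine ⟨hr0, ?_, ?_, h1, ?_, h3⟩
    · -- split row
      refine cov_of_ses sesSplit (fun W hW u => ⟨u ≫ biprod.inr, by simp⟩)
    · -- bottom row
      refine cov_of_ses sesBot (fun W hW u => ?_)
      obtain ⟨s, hs⟩ := (h3 W hW).2.2 u
      simp only at hs
      refine ⟨s ≫ biprod.inr ≫ fB, ?_⟩
      show (s ≫ biprod.inr ≫ fB) ≫ y1 = u
      rw [Category.assoc, Category.assoc, hy1, biprod.inr_snd_assoc, hs]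
    · -- middle column
      refine cov_of_ses sesB (fun W hW u => ?_)
      obtain ⟨s, hs⟩ := (h3 W hW).2.2 (u ≫ y1)
      simp only at hs
      have h5 : (u - s ≫ biprod.inr ≫ fB) ≫ y1 = 0 := by
        simp only [Preadditive.sub_comp, Category.assoc, hy1, biprod.inr_snd_assoc, hs,
          sub_self]
      obtain ⟨w0, hw0⟩ := KernelFork.IsLimit.lift' sesBot.2.fIsKernel _ h5
      have hw0 : w0 ≫ x1 = u - s ≫ biprod.inr ≫ fB := hw0
      obtain ⟨a, ha⟩ := (h1 W hW).2.2 w0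
      simp only at ha
      refine ⟨a ≫ biprod.inl + s ≫ biprod.inr, ?_⟩
      show (a ≫ biprod.inl + s ≫ biprod.inr) ≫ fB = u
      simp only [Preadditive.add_comp, Category.assoc, ← hx1]
      rw [← Category.assoc, ha, hw0]
      abel
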